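/- Let S be a topological ternary semigroup whose underlying space is a k-space, and let I be a regular closed ideal of S. If S∖I° (the complement of the interior of I) is a k_w-space in the subspace topology, then the Rees quotient S/((I×I) ∪ Δ(S)), with the induced ternary multiplication and the quotient topology, is a topological ternary semigroup: it is Hausdorff and its induced ternary multiplication is continuous. -/

import Mathlib

/-- A Hausdorff topological space `X` is a `k`-space if it has the weak topology
determined by its compact subspaces: a set `A ⊆ X` is closed whenever `A ∩ K` is closed
in `K` (with the subspace topology) for every compact `K ⊆ X`. -/
def IsKSpace (X : Type*) [TopologicalSpace X] : Prop :=
  ∀ A : Set X, (∀ K : Set X, IsCompact K → IsClosed (Subtype.val ⁻¹' A : Set K)) →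
    IsClosed A

/-- A topological space `X` is a `k_w`-space if it is the union of a countable collection
`{K n}` of compact subsets such that a set `A ⊆ X` is closed whenever `A ∩ K n` is closed
in `K n` (with the subspace topology) for every `n`. -/
def IsKwSpace (X : Type*) [TopologicalSpace X] : Prop :=
  ∃ K : ℕ → Set X, (∀ n, IsCompact (K n)) ∧ (⋃ n, K n) = Set.univ ∧
    ∀ A : Set X, (∀ n, IsClosed (Subtype.val ⁻¹' A : Set (K n))) → IsClosed A

/-- Let `S` be a topological ternary semigroup whose underlying space
is a `k`-space and let `I` be a regular closed ideal of `S`.  If `S ∖ I°` is a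
`k_w`-space in the subspace topology, then the Rees quotient `S/((I×I) ∪ Δ(S))`, with
the induced ternary multiplication and the quotient topology, is a topological ternary
semigroup: it is Hausdorff and the induced multiplication is continuous. -/


lemma my_wallace3 {S : Type*} [TopologicalSpace S] (m : S → S → S → S)
    (hm : Continuous fun p : S × S × S => m p.1 p.2.1 p.2.2)
    {T₀ T₁ T₂ O : Set S} (h₀ : IsCompact T₀) (h₁ : IsCompact T₁) (h₂ : IsCompact T₂)
    (hO : IsOpen O) (h : ∀ x ∈ T₀, ∀ y ∈ T₁, ∀ z ∈ T₂, m x y z ∈ O) :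
    ∃ G₀ G₁ G₂ : Set S, IsOpen G₀ ∧ IsOpen G₁ ∧ IsOpen G₂ ∧ T₀ ⊆ G₀ ∧ T₁ ⊆ G₁ ∧ T₂ ⊆ G₂ ∧
      ∀ x ∈ G₀, ∀ y ∈ G₁, ∀ z ∈ G₂, m x y z ∈ O := by
  have hW : IsOpen ((fun p : S × S × S => m p.1 p.2.1 p.2.2) ⁻¹' O) := hO.preimage hm
  have hsub : T₀ ×ˢ (T₁ ×ˢ T₂) ⊆ (fun p : S × S × S => m p.1 p.2.1 p.2.2) ⁻¹' O := by
    rintro ⟨x, y, z⟩ ⟨hx, hy, hz⟩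
    exact h x hx y hy z hz
  obtain ⟨u, v, hu, hv, hT₀u, hT₁₂v, huv⟩ :=
    generalized_tube_lemma h₀ (h₁.prod h₂) hW hsub
  obtain ⟨v₁, v₂, hv₁, hv₂, hT₁v₁, hT₂v₂, hv₁₂⟩ :=
    generalized_tube_lemma h₁ h₂ hv hT₁₂v
  refine ⟨u, v₁, v₂, hu, hv₁, hv₂, hT₀u, hT₁v₁, hT₂v₂, fun x hx y hy z hz => ?_⟩
  exact huv (Set.mk_mem_prod hx (hv₁₂ (Set.mk_mem_prod hy hz)))

lemma my_sandwich {S : Type*} [TopologicalSpace S] [T2Space S] {K T G : Set S}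
    (hK : IsCompact K) (hT : IsCompact T) (hG : IsOpen G) (hTG : T ⊆ G) :
    ∃ U F : Set S, IsOpen U ∧ IsCompact F ∧ T ⊆ U ∧ U ∩ K ⊆ F ∧ F ⊆ G ∧ F ⊆ K := by
  have hL : IsCompact (K \ G) := hK.diff hG
  have hdisj : Disjoint T (K \ G) := by
    rw [Set.disjoint_left]; exact fun x hx hx' => hx'.2 (hTG hx)
  obtain ⟨U, V, hU, hV, hTU, hLV, hUV⟩ := SeparatedNhds.of_isCompact_isCompact hT hL hdisj
  refine ⟨U, K \ V, hU, hK.diff hV, hTU, ?_, ?_, Set.diff_subset⟩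
  · rintro x ⟨hxU, hxK⟩
    exact ⟨hxK, fun hxV => Set.disjoint_left.1 hUV hxU hxV⟩
  · rintro x ⟨hxK, hxV⟩
    by_contra hxG
    exact hxV (hLV ⟨hxK, hxG⟩)

def GoodSt {S : Type*} [TopologicalSpace S] (m : S → S → S → S) (I : Set S)
    (M : ℕ → Set S) (a b c : S) (O : Set S) (n : ℕ)
    (p : (Set S × Set S) × (Set S × Set S) × (Set S × Set S)) : Prop :=
  (IsOpen p.1.1 ∧ IsCompact p.1.2 ∧ p.1.2 ⊆ M n ∧ p.1.1 ∩ M n ⊆ p.1.2) ∧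
  (IsOpen p.2.1.1 ∧ IsCompact p.2.1.2 ∧ p.2.1.2 ⊆ M n ∧ p.2.1.1 ∩ M n ⊆ p.2.1.2) ∧
  (IsOpen p.2.2.1 ∧ IsCompact p.2.2.2 ∧ p.2.2.2 ⊆ M n ∧ p.2.2.1 ∩ M n ⊆ p.2.2.2) ∧
  (∀ x ∈ p.1.2 ∪ ({a} ∩ Iᶜ), ∀ y ∈ p.2.1.2 ∪ ({b} ∩ Iᶜ), ∀ z ∈ p.2.2.2 ∪ ({c} ∩ Iᶜ),
    m x y z ∈ O)

def LinkSt {S : Type*} (I : Set S) (M : ℕ → Set S) (a b c : S) (n : ℕ)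
    (p q : (Set S × Set S) × (Set S × Set S) × (Set S × Set S)) : Prop :=
  (p.1.2 ⊆ q.1.1 ∧ p.1.2 ⊆ q.1.2 ∧ I ∩ M (n+1) ⊆ q.1.1 ∧ {a} ∩ Iᶜ ⊆ q.1.1) ∧
  (p.2.1.2 ⊆ q.2.1.1 ∧ p.2.1.2 ⊆ q.2.1.2 ∧ I ∩ M (n+1) ⊆ q.2.1.1 ∧ {b} ∩ Iᶜ ⊆ q.2.1.1) ∧
  (p.2.2.2 ⊆ q.2.2.1 ∧ p.2.2.2 ⊆ q.2.2.2 ∧ I ∩ M (n+1) ⊆ q.2.2.1 ∧ {c} ∩ Iᶜ ⊆ q.2.2.1)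

lemma my_step {S : Type*} [TopologicalSpace S] [T2Space S] (m : S → S → S → S)
    (hm : Continuous fun p : S × S × S => m p.1 p.2.1 p.2.2)
    (I : Set S) (hIclosed : IsClosed I)
    (hideal : ∀ a b : S, ∀ x ∈ I, m a b x ∈ I ∧ m a x b ∈ I ∧ m x a b ∈ I)
    (M : ℕ → Set S) (hMc : ∀ n, IsCompact (M n))
    (hMchain : ∀ k l, k ≤ l → M k ⊆ M l)
    (a b c : S)
    (hMa : {a} ∩ Iᶜ ⊆ M 0) (hMb : {b} ∩ Iᶜ ⊆ M 0) (hMc' : {c} ∩ Iᶜ ⊆ M 0)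
    (O : Set S) (hO : IsOpen O) (hIO : I ⊆ O)
    (n : ℕ) (p : (Set S × Set S) × (Set S × Set S) × (Set S × Set S))
    (hp : GoodSt m I M a b c O n p) :
    ∃ q, GoodSt m I M a b c O (n+1) q ∧ LinkSt I M a b c n p q := by
  obtain ⟨⟨hU₀, hF₀c, hF₀M, hUF₀⟩, ⟨hU₁, hF₁c, hF₁M, hUF₁⟩, ⟨hU₂, hF₂c, hF₂M, hUF₂⟩, hInv⟩ := hp
  set F₀ := p.1.2; set F₁ := p.2.1.2; set F₂ := p.2.2.2
  set sa := {a} ∩ Iᶜ with hsa; set sb := {b} ∩ Iᶜ with hsb; set sc := {c} ∩ Iᶜ with hsc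
  have hsac : IsCompact sa := ((Set.finite_singleton a).inter_of_left _).isCompact
  have hsbc : IsCompact sb := ((Set.finite_singleton b).inter_of_left _).isCompact
  have hscc : IsCompact sc := ((Set.finite_singleton c).inter_of_left _).isCompact
  have hIM : IsCompact (I ∩ M (n+1)) := (hMc (n+1)).inter_left hIclosed
  set T₀ := (F₀ ∪ sa) ∪ (I ∩ M (n+1)) with hT₀
  set T₁ := (F₁ ∪ sb) ∪ (I ∩ M (n+1)) with hT₁
  set T₂ := (F₂ ∪ sc) ∪ (I ∩ M (n+1)) with hT₂
  have hT₀c : IsCompact T₀ := (hF₀c.union hsac).union hIM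
  have hT₁c : IsCompact T₁ := (hF₁c.union hsbc).union hIM
  have hT₂c : IsCompact T₂ := (hF₂c.union hscc).union hIM
  have hmT : ∀ x ∈ T₀, ∀ y ∈ T₁, ∀ z ∈ T₂, m x y z ∈ O := by
    intro x hx y hy z hz
    rcases hx with hx | hx
    · rcases hy with hy | hy
      · rcases hz with hz | hz
        · exact hInv x hx y hy z hz
        · exact hIO (hideal x y z hz.1).1
      · exact hIO (hideal x z y hy.1).2.1
    · exact hIO (hideal y z x hx.1).2.2
  obtain ⟨G₀, G₁, G₂, hG₀, hG₁, hG₂, hTG₀, hTG₁, hTG₂, hGm⟩ :=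
    my_wallace3 m hm hT₀c hT₁c hT₂c hO hmT
  have hT₀M : T₀ ⊆ M (n+1) := by
    rintro x ((hx | hx) | hx)
    · exact hMchain n (n+1) (Nat.le_succ n) (hF₀M hx)
    · exact hMchain 0 (n+1) (Nat.zero_le _) (hMa hx)
    · exact hx.2
  have hT₁M : T₁ ⊆ M (n+1) := by
    rintro x ((hx | hx) | hx)
    · exact hMchain n (n+1) (Nat.le_succ n) (hF₁M hx)
    · exact hMchain 0 (n+1) (Nat.zero_le _) (hMb hx)
    · exact hx.2
  have hT₂M : T₂ ⊆ M (n+1) := by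
    rintro x ((hx | hx) | hx)
    · exact hMchain n (n+1) (Nat.le_succ n) (hF₂M hx)
    · exact hMchain 0 (n+1) (Nat.zero_le _) (hMc' hx)
    · exact hx.2
  obtain ⟨U₀', F₀', hU₀', hF₀'c, hTU₀, hUF₀', hF₀G, hF₀M'⟩ :=
    my_sandwich (hMc (n+1)) hT₀c hG₀ hTG₀
  obtain ⟨U₁', F₁', hU₁', hF₁'c, hTU₁, hUF₁', hF₁G, hF₁M'⟩ :=
    my_sandwich (hMc (n+1)) hT₁c hG₁ hTG₁
  obtain ⟨U₂', F₂', hU₂', hF₂'c, hTU₂, hUF₂', hF₂G, hF₂M'⟩ :=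
    my_sandwich (hMc (n+1)) hT₂c hG₂ hTG₂
  refine ⟨((U₀', F₀'), (U₁', F₁'), (U₂', F₂')), ⟨⟨hU₀', hF₀'c, hF₀M', hUF₀'⟩,
    ⟨hU₁', hF₁'c, hF₁M', hUF₁'⟩, ⟨hU₂', hF₂'c, hF₂M', hUF₂'⟩, ?_⟩, ?_, ?_, ?_⟩
  · -- new invariant
    intro x hx y hy z hz
    have hx' : x ∈ G₀ := by
      rcases hx with hx | hx
      · exact hF₀G hx
      · exact hTG₀ (Or.inl (Or.inr hx))
    have hy' : y ∈ G₁ := by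
      rcases hy with hy | hy
      · exact hF₁G hy
      · exact hTG₁ (Or.inl (Or.inr hy))
    have hz' : z ∈ G₂ := by
      rcases hz with hz | hz
      · exact hF₂G hz
      · exact hTG₂ (Or.inl (Or.inr hz))
    exact hGm x hx' y hy' z hz'
  · exact ⟨fun x hx => hTU₀ (Or.inl (Or.inl hx)),
      fun x hx => hUF₀' ⟨hTU₀ (Or.inl (Or.inl hx)), hT₀M (Or.inl (Or.inl hx))⟩,
      fun x hx => hTU₀ (Or.inr hx), fun x hx => hTU₀ (Or.inl (Or.inr hx))⟩
  · exact ⟨fun x hx => hTU₁ (Or.inl (Or.inl hx)),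
      fun x hx => hUF₁' ⟨hTU₁ (Or.inl (Or.inl hx)), hT₁M (Or.inl (Or.inl hx))⟩,
      fun x hx => hTU₁ (Or.inr hx), fun x hx => hTU₁ (Or.inl (Or.inr hx))⟩
  · exact ⟨fun x hx => hTU₂ (Or.inl (Or.inl hx)),
      fun x hx => hUF₂' ⟨hTU₂ (Or.inl (Or.inl hx)), hT₂M (Or.inl (Or.inl hx))⟩,
      fun x hx => hTU₂ (Or.inr hx), fun x hx => hTU₂ (Or.inl (Or.inr hx))⟩



lemma my_extract {S : Type*} [TopologicalSpace S] [T2Space S]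
    (I : Set S) (M : ℕ → Set S)
    (hMc : ∀ n, IsCompact (M n))
    (hMsub : ∀ n, M n ⊆ (interior I)ᶜ)
    (hMchain : ∀ k l, k ≤ l → M k ⊆ M l)
    (hMcover : (interior I)ᶜ ⊆ ⋃ n, M n)
    (hMcrit : ∀ A : Set S, A ⊆ (interior I)ᶜ → (∀ n, IsClosed (A ∩ M n)) → IsClosed A)
    (U F : ℕ → Set S) (pt : S)
    (hUopen : ∀ n, IsOpen (U n))
    (hUF : ∀ n, U n ∩ M n ⊆ F n)
    (hFU : ∀ n, F n ⊆ U (n+1))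
    (hIU : ∀ n, I ∩ M (n+1) ⊆ U (n+1))
    (hptU : {pt} ∩ Iᶜ ⊆ U 1)
    (hptM : {pt} ∩ Iᶜ ⊆ M 0) :
    ∃ A : Set S, IsOpen A ∧ I ⊆ A ∧ pt ∈ A ∧ ∀ x ∈ A, x ∈ I ∨ ∃ n, x ∈ F n := by
  classical
  set V := ⋃ n, U n ∩ M n with hV
  have chainUM : ∀ k l, k ≤ l → U k ∩ M k ⊆ U l ∩ M l := by
    intro k l h
    induction l, h using Nat.le_induction with
    | base => exact subset_rfl
    | succ n hn ih =>
      refine ih.trans fun x hx => ⟨hFU n (hUF n hx), hMchain n (n+1) (Nat.le_succ n) hx.2⟩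
  have claim1 : ∀ k, V ∩ M k = (⋃ n, U (k+n)) ∩ M k := by
    intro k
    ext x
    constructor
    · rintro ⟨hxV, hxk⟩
      refine ⟨?_, hxk⟩
      obtain ⟨s, ⟨n, rfl⟩, hx⟩ := hxV
      have : x ∈ U (k+n) ∩ M (k+n) :=
        chainUM n (k+n) (Nat.le_add_left n k) hx
      exact Set.mem_iUnion.2 ⟨n, this.1⟩
    · rintro ⟨hxU, hxk⟩
      obtain ⟨s, ⟨n, rfl⟩, hx⟩ := hxU
      refine ⟨Set.mem_iUnion.2 ⟨k+n, ⟨hx, hMchain k (k+n) (Nat.le_add_right k n) hxk⟩⟩, hxk⟩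
  have hVC : V ⊆ (interior I)ᶜ := by
    rintro x ⟨s, ⟨n, rfl⟩, hx⟩
    exact hMsub n hx.2
  have hclosed : IsClosed ((interior I)ᶜ \ V) := by
    apply hMcrit _ (Set.diff_subset.trans subset_rfl)
    intro k
    have heq : ((interior I)ᶜ \ V) ∩ M k = M k ∩ (⋃ n, U (k+n))ᶜ := by
      ext x
      constructor
      · rintro ⟨⟨hxC, hxV⟩, hxk⟩
        refine ⟨hxk, fun hxU => hxV ?_⟩
        have : x ∈ (⋃ n, U (k+n)) ∩ M k := ⟨hxU, hxk⟩
        rw [← claim1 k] at this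
        exact this.1
      · rintro ⟨hxk, hxU⟩
        refine ⟨⟨hMsub k hxk, fun hxV => hxU ?_⟩, hxk⟩
        have : x ∈ V ∩ M k := ⟨hxV, hxk⟩
        rw [claim1 k] at this
        exact this.1
    rw [heq]
    exact ((hMc k).isClosed).inter (isOpen_iUnion fun n => hUopen (k+n)).isClosed_compl
  refine ⟨((interior I)ᶜ \ V)ᶜ, hclosed.isOpen_compl, ?_, ?_, ?_⟩
  · -- I ⊆ A
    intro x hx
    by_cases hxi : x ∈ interior I
    · intro h; exact h.1 hxi
    · intro h
      apply h.2
      obtain ⟨s, ⟨n, rfl⟩, hxn⟩ := hMcover hxi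
      exact Set.mem_iUnion.2 ⟨n+1, hIU n ⟨hx, hMchain n (n+1) (Nat.le_succ n) hxn⟩,
        hMchain n (n+1) (Nat.le_succ n) hxn⟩
  · -- pt ∈ A
    by_cases hptI : pt ∈ I
    · by_cases hpti : pt ∈ interior I
      · intro h; exact h.1 hpti
      · intro h
        apply h.2
        obtain ⟨s, ⟨n, rfl⟩, hxn⟩ := hMcover hpti
        exact Set.mem_iUnion.2 ⟨n+1, hIU n ⟨hptI, hMchain n (n+1) (Nat.le_succ n) hxn⟩,
          hMchain n (n+1) (Nat.le_succ n) hxn⟩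
    · intro h
      apply h.2
      have h1 : pt ∈ U 1 := hptU ⟨rfl, hptI⟩
      have h0 : pt ∈ M 0 := hptM ⟨rfl, hptI⟩
      exact Set.mem_iUnion.2 ⟨1, h1, hMchain 0 1 (Nat.zero_le 1) h0⟩
  · -- control
    intro x hx
    by_cases hxC : x ∈ (interior I)ᶜ
    · have hxV : x ∈ V := by
        by_contra hxV
        exact hx ⟨hxC, hxV⟩
      obtain ⟨s, ⟨n, rfl⟩, hxn⟩ := hxV
      exact Or.inr ⟨n, hUF n hxn⟩
    · simp only [Set.notMem_compl_iff] at hxC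
      exact Or.inl (interior_subset hxC)

lemma my_master {S : Type*} [TopologicalSpace S] [T2Space S] (m : S → S → S → S)
    (hm : Continuous fun p : S × S × S => m p.1 p.2.1 p.2.2)
    (I : Set S) (hIclosed : IsClosed I)
    (hideal : ∀ a b : S, ∀ x ∈ I, m a b x ∈ I ∧ m a x b ∈ I ∧ m x a b ∈ I)
    (M : ℕ → Set S)
    (hMc : ∀ n, IsCompact (M n))
    (hMsub : ∀ n, M n ⊆ (interior I)ᶜ)
    (hMchain : ∀ k l, k ≤ l → M k ⊆ M l)
    (hMcover : (interior I)ᶜ ⊆ ⋃ n, M n)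
    (hMcrit : ∀ A : Set S, A ⊆ (interior I)ᶜ → (∀ n, IsClosed (A ∩ M n)) → IsClosed A)
    (a b c : S)
    (hMa : {a} ∩ Iᶜ ⊆ M 0) (hMb : {b} ∩ Iᶜ ⊆ M 0) (hMc' : {c} ∩ Iᶜ ⊆ M 0)
    (O : Set S) (hO : IsOpen O) (hIO : I ⊆ O) (habc : m a b c ∈ O) :
    ∃ A B C : Set S, IsOpen A ∧ IsOpen B ∧ IsOpen C ∧
      a ∈ A ∧ b ∈ B ∧ c ∈ C ∧ I ⊆ A ∧ I ⊆ B ∧ I ⊆ C ∧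
      ∀ x ∈ A, ∀ y ∈ B, ∀ z ∈ C, m x y z ∈ O := by
  classical
  set p0 : (Set S × Set S) × (Set S × Set S) × (Set S × Set S) :=
    ((∅, ∅), (∅, ∅), (∅, ∅)) with hp0
  have hGood0 : GoodSt m I M a b c O 0 p0 := by
    refine ⟨⟨isOpen_empty, isCompact_empty, Set.empty_subset _, ?_⟩,
      ⟨isOpen_empty, isCompact_empty, Set.empty_subset _, ?_⟩,
      ⟨isOpen_empty, isCompact_empty, Set.empty_subset _, ?_⟩, ?_⟩
    · simp [hp0]
    · simp [hp0]
    · simp [hp0]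
    · rintro x (hx | hx) y (hy | hy) z (hz | hz) <;>
        simp only [hp0, Set.mem_empty_iff_false] at *
      · obtain ⟨rfl, -⟩ := hx
        obtain ⟨rfl, -⟩ := hy
        obtain ⟨rfl, -⟩ := hz
        exact habc
  have hstep := my_step m hm I hIclosed hideal M hMc hMchain a b c hMa hMb hMc' O hO hIO
  let next : ℕ → ((Set S × Set S) × (Set S × Set S) × (Set S × Set S)) →
      ((Set S × Set S) × (Set S × Set S) × (Set S × Set S)) := fun n p =>
    if h : GoodSt m I M a b c O n p then (hstep n p h).choose else p
  let seq : ℕ → (Set S × Set S) × (Set S × Set S) × (Set S × Set S) := fun n =>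
    Nat.rec p0 next n
  have hseqS : ∀ n, seq (n+1) = next n (seq n) := fun n => rfl
  have hgood : ∀ n, GoodSt m I M a b c O n (seq n) := by
    intro n
    induction n with
    | zero => exact hGood0
    | succ k ih =>
      rw [hseqS k]
      show GoodSt m I M a b c O (k+1) (if h : GoodSt m I M a b c O k (seq k)
        then (hstep k (seq k) h).choose else seq k)
      rw [dif_pos ih]
      exact (hstep k (seq k) ih).choose_spec.1
  have hlink : ∀ n, LinkSt I M a b c n (seq n) (seq (n+1)) := by
    intro n
    rw [hseqS n]
    show LinkSt I M a b c n (seq n) (if h : GoodSt m I M a b c O n (seq n)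
      then (hstep n (seq n) h).choose else seq n)
    rw [dif_pos (hgood n)]
    exact (hstep n (seq n) (hgood n)).choose_spec.2
  -- coordinate sequences
  set U₀ : ℕ → Set S := fun n => (seq n).1.1 with hU₀d
  set F₀ : ℕ → Set S := fun n => (seq n).1.2 with hF₀d
  set U₁ : ℕ → Set S := fun n => (seq n).2.1.1 with hU₁d
  set F₁ : ℕ → Set S := fun n => (seq n).2.1.2 with hF₁d
  set U₂ : ℕ → Set S := fun n => (seq n).2.2.1 with hU₂d
  set F₂ : ℕ → Set S := fun n => (seq n).2.2.2 with hF₂d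
  have hFchain₀ : ∀ k l, k ≤ l → F₀ k ⊆ F₀ l := by
    intro k l h
    induction l, h using Nat.le_induction with
    | base => exact subset_rfl
    | succ n hn ih => exact ih.trans (hlink n).1.2.1
  have hFchain₁ : ∀ k l, k ≤ l → F₁ k ⊆ F₁ l := by
    intro k l h
    induction l, h using Nat.le_induction with
    | base => exact subset_rfl
    | succ n hn ih => exact ih.trans (hlink n).2.1.2.1
  have hFchain₂ : ∀ k l, k ≤ l → F₂ k ⊆ F₂ l := by
    intro k l h
    induction l, h using Nat.le_induction with
    | base => exact subset_rfl
    | succ n hn ih => exact ih.trans (hlink n).2.2.2.1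
  obtain ⟨A, hAo, hIA, haA, hActrl⟩ :=
    my_extract I M hMc hMsub hMchain hMcover hMcrit U₀ F₀ a
      (fun n => (hgood n).1.1) (fun n => (hgood n).1.2.2.2)
      (fun n => (hlink n).1.1) (fun n => (hlink n).1.2.2.1) ((hlink 0).1.2.2.2) hMa
  obtain ⟨B, hBo, hIB, hbB, hBctrl⟩ :=
    my_extract I M hMc hMsub hMchain hMcover hMcrit U₁ F₁ b
      (fun n => (hgood n).2.1.1) (fun n => (hgood n).2.1.2.2.2)
      (fun n => (hlink n).2.1.1) (fun n => (hlink n).2.1.2.2.1) ((hlink 0).2.1.2.2.2) hMb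
  obtain ⟨C, hCo, hIC, hcC, hCctrl⟩ :=
    my_extract I M hMc hMsub hMchain hMcover hMcrit U₂ F₂ c
      (fun n => (hgood n).2.2.1.1) (fun n => (hgood n).2.2.1.2.2.2)
      (fun n => (hlink n).2.2.1) (fun n => (hlink n).2.2.2.2.1) ((hlink 0).2.2.2.2.2) hMc'
  -- a ∈ A: from extract we get pt ∈ A directly
  refine ⟨A, B, C, hAo, hBo, hCo, haA, hbB, hcC, hIA, hIB, hIC, ?_⟩
  intro x hx y hy z hz
  rcases hActrl x hx with hxI | ⟨n₀, hxF⟩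
  · exact hIO (hideal y z x hxI).2.2
  rcases hBctrl y hy with hyI | ⟨n₁, hyF⟩
  · exact hIO (hideal x z y hyI).2.1
  rcases hCctrl z hz with hzI | ⟨n₂, hzF⟩
  · exact hIO (hideal x y z hzI).1
  set N := max n₀ (max n₁ n₂) with hN
  exact (hgood N).2.2.2 x (Or.inl (hFchain₀ n₀ N (le_max_left _ _) hxF))
    y (Or.inl (hFchain₁ n₁ N ((le_max_left _ _).trans (le_max_right _ _)) hyF))
    z (Or.inl (hFchain₂ n₂ N ((le_max_right _ _).trans (le_max_right _ _)) hzF))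

theorem rees_quotient_topological_ternary_semigroup_of_kSpace {S : Type*}
    [TopologicalSpace S] [T2Space S] (m : S → S → S → S)
    (hassoc : ∀ a b c d e : S, m (m a b c) d e = m a (m b c d) e ∧
      m a (m b c d) e = m a b (m c d e))
    (hm : Continuous fun p : S × S × S => m p.1 p.2.1 p.2.2)
    (hk : IsKSpace S)
    (I : Set S) (hne : I.Nonempty) (hIclosed : IsClosed I)
    (hideal : ∀ a b : S, ∀ x ∈ I, m a b x ∈ I ∧ m a x b ∈ I ∧ m x a b ∈ I)
    (hreg : ∀ x ∉ I, ∃ V W : Set S,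
      IsOpen V ∧ IsOpen W ∧ x ∈ V ∧ I ⊆ W ∧ V ∩ W = ∅)
    (hkw : IsKwSpace ((interior I)ᶜ : Set S))
    (s : Setoid S)
    (hrel : ∀ x y : S, s.r x y ↔ ((x ∈ I ∧ y ∈ I) ∨ x = y))
    (g : Quotient s → Quotient s → Quotient s → Quotient s)
    (hg : ∀ a b c : S, g (Quotient.mk s a) (Quotient.mk s b) (Quotient.mk s c)
      = Quotient.mk s (m a b c)) :
    T2Space (Quotient s) ∧
      Continuous fun p : Quotient s × Quotient s × Quotient s => g p.1 p.2.1 p.2.2 := by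
  classical
  have hCclosed : IsClosed ((interior I)ᶜ : Set S) := isClosed_compl_iff.2 isOpen_interior
  -- quotient basics
  have qeq : ∀ x y : S, Quotient.mk s x = Quotient.mk s y ↔ ((x ∈ I ∧ y ∈ I) ∨ x = y) := by
    intro x y
    constructor
    · intro h
      exact (hrel x y).1 (Quotient.exact h)
    · intro h
      exact Quotient.sound ((hrel x y).2 h)
  have hqm : Topology.IsQuotientMap (Quotient.mk s : S → Quotient s) :=
    isQuotientMap_quotient_mk'
  have qcont : Continuous (Quotient.mk s : S → Quotient s) := hqm.continuous
  have qopen : ∀ A : Set S, IsOpen A → (I ⊆ A ∨ A ∩ I = ∅) →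
      IsOpen (Quotient.mk s '' A) := by
    intro A hA hsat
    rw [← hqm.isOpen_preimage]
    have heq : Quotient.mk s ⁻¹' (Quotient.mk s '' A) = A := by
      ext x
      simp only [Set.mem_preimage, Set.mem_image]
      constructor
      · rintro ⟨y, hyA, hxy⟩
        rcases (qeq y x).1 hxy with ⟨hyI, hxI⟩ | rfl
        · rcases hsat with h | h
          · exact h hxI
          · exact absurd (Set.mem_inter hyA hyI) (by rw [h]; exact Set.notMem_empty y)
        · exact hyA
      · exact fun h => ⟨x, h, rfl⟩
    rw [heq]; exact hA
  constructor
  · -- Hausdorff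
    refine ⟨fun u v huv => ?_⟩
    revert huv
    refine Quotient.inductionOn₂ u v ?_
    intro x y huv
    by_cases hx : x ∈ I <;> by_cases hy : y ∈ I
    · exact absurd ((qeq x y).2 (Or.inl ⟨hx, hy⟩)) huv
    · obtain ⟨V, W, hV, hW, hyV, hIW, hVW⟩ := hreg y hy
      have hVI : V ∩ I = ∅ := by
        apply Set.eq_empty_iff_forall_notMem.2
        rintro z ⟨hzV, hzI⟩
        exact Set.eq_empty_iff_forall_notMem.1 hVW z ⟨hzV, hIW hzI⟩
      refine ⟨Quotient.mk s '' W, Quotient.mk s '' V, qopen W hW (Or.inl hIW),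
        qopen V hV (Or.inr hVI), ⟨x, hIW hx, rfl⟩, ⟨y, hyV, rfl⟩, ?_⟩
      rw [Set.disjoint_left]
      rintro q ⟨w, hwW, rfl⟩ ⟨z, hzV, hzw⟩
      rcases (qeq z w).1 hzw with ⟨hzI, hwI⟩ | rfl
      · exact Set.eq_empty_iff_forall_notMem.1 hVI z ⟨hzV, hzI⟩
      · exact Set.eq_empty_iff_forall_notMem.1 hVW z ⟨hzV, hwW⟩
    · obtain ⟨V, W, hV, hW, hxV, hIW, hVW⟩ := hreg x hx
      have hVI : V ∩ I = ∅ := by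
        apply Set.eq_empty_iff_forall_notMem.2
        rintro z ⟨hzV, hzI⟩
        exact Set.eq_empty_iff_forall_notMem.1 hVW z ⟨hzV, hIW hzI⟩
      refine ⟨Quotient.mk s '' V, Quotient.mk s '' W, qopen V hV (Or.inr hVI),
        qopen W hW (Or.inl hIW), ⟨x, hxV, rfl⟩, ⟨y, hIW hy, rfl⟩, ?_⟩
      rw [Set.disjoint_left]
      rintro q ⟨z, hzV, rfl⟩ ⟨w, hwW, hwz⟩
      rcases (qeq w z).1 hwz with ⟨hwI, hzI⟩ | rfl
      · exact Set.eq_empty_iff_forall_notMem.1 hVI z ⟨hzV, hzI⟩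
      · exact Set.eq_empty_iff_forall_notMem.1 hVW _ ⟨hzV, hwW⟩
    · have hxy : x ≠ y := fun h => huv (h ▸ rfl)
      obtain ⟨U, V, hU, hV, hxU, hyV, hUV⟩ := t2_separation hxy
      refine ⟨Quotient.mk s '' (U \ I), Quotient.mk s '' (V \ I),
        qopen _ (hU.sdiff hIclosed) (Or.inr (Set.diff_inter_self)),
        qopen _ (hV.sdiff hIclosed) (Or.inr (Set.diff_inter_self)),
        ⟨x, ⟨hxU, hx⟩, rfl⟩, ⟨y, ⟨hyV, hy⟩, rfl⟩, ?_⟩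
      rw [Set.disjoint_left]
      rintro q ⟨p, ⟨hpU, hpI⟩, rfl⟩ ⟨r, ⟨hrV, hrI⟩, hrp⟩
      rcases (qeq r p).1 hrp with ⟨hrI', _⟩ | rfl
      · exact hrI hrI'
      · exact Set.disjoint_left.1 hUV hpU hrV
  · -- Continuity
    -- ambient version of the k_ω property
    obtain ⟨K, hKc, hKcov, hKcrit⟩ := hkw
    set N : ℕ → Set S := fun n => Subtype.val '' K n with hN
    have hNc : ∀ n, IsCompact (N n) := fun n => (hKc n).image continuous_subtype_val
    have hNsub : ∀ n, N n ⊆ (interior I)ᶜ := fun n => Subtype.coe_image_subset _ _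
    have hNcov : ((interior I)ᶜ : Set S) ⊆ ⋃ n, N n := by
      intro x hx
      have hmem : (⟨x, hx⟩ : ((interior I)ᶜ : Set S)) ∈ ⋃ n, K n := by
        rw [hKcov]; trivial
      obtain ⟨t, ⟨n, rfl⟩, h⟩ := hmem
      exact Set.mem_iUnion.2 ⟨n, ⟨⟨x, hx⟩, h, rfl⟩⟩
    have hNcrit : ∀ A : Set S, A ⊆ (interior I)ᶜ → (∀ n, IsClosed (A ∩ N n)) →
        IsClosed A := by
      intro A hAC hA
      have hA' : IsClosed (Subtype.val ⁻¹' A : Set ((interior I)ᶜ : Set S)) := by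
        apply hKcrit
        intro n
        have heq : (Subtype.val ⁻¹' (Subtype.val ⁻¹' A :
            Set ((interior I)ᶜ : Set S)) : Set (K n)) =
            (fun x : K n => ((x : ((interior I)ᶜ : Set S)) : S)) ⁻¹' (A ∩ N n) := by
          ext x
          simp only [Set.mem_preimage, Set.mem_inter_iff]
          exact ⟨fun h => ⟨h, ⟨x.1, x.2, rfl⟩⟩, fun h => h.1⟩
        rw [heq]
        exact (hA n).preimage (continuous_subtype_val.comp continuous_subtype_val)
      have hAeq : A = Subtype.val '' (Subtype.val ⁻¹' A :
          Set ((interior I)ᶜ : Set S)) := by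
        rw [Subtype.image_preimage_coe]
        exact (Set.inter_eq_right.2 hAC).symm
      rw [hAeq]
      exact hCclosed.isClosedEmbedding_subtypeVal.isClosedMap _ hA'
    rw [continuous_iff_continuousAt]
    rintro ⟨u₁, u₂, u₃⟩
    obtain ⟨a, rfl⟩ := Quotient.exists_rep u₁
    obtain ⟨b, rfl⟩ := Quotient.exists_rep u₂
    obtain ⟨c, rfl⟩ := Quotient.exists_rep u₃
    rw [ContinuousAt, Filter.tendsto_def]
    intro U hU
    replace hU : U ∈ nhds (Quotient.mk s (m a b c)) := by
      rw [← hg a b c]; exact hU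
    obtain ⟨O', hO'U, hO'open, hfpO'⟩ := mem_nhds_iff.1 hU
    set O : Set S := Quotient.mk s ⁻¹' O' with hOdef
    have hO : IsOpen O := hO'open.preimage qcont
    have hmabc : m a b c ∈ O := hfpO'
    have finish : ∀ A B C : Set S, IsOpen A → IsOpen B → IsOpen C →
        a ∈ A → b ∈ B → c ∈ C →
        (I ⊆ A ∨ A ∩ I = ∅) → (I ⊆ B ∨ B ∩ I = ∅) → (I ⊆ C ∨ C ∩ I = ∅) →
        (∀ x ∈ A, ∀ y ∈ B, ∀ z ∈ C, m x y z ∈ O) →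
        (fun p : Quotient s × Quotient s × Quotient s => g p.1 p.2.1 p.2.2) ⁻¹' U ∈
          nhds ((⟦a⟧ : Quotient s), (⟦b⟧ : Quotient s), (⟦c⟧ : Quotient s)) := by
      intro A B C hA hB hC haA hbB hcC sA sB sC hmprop
      have hopen : IsOpen ((Quotient.mk s '' A) ×ˢ
          ((Quotient.mk s '' B) ×ˢ (Quotient.mk s '' C))) :=
        (qopen A hA sA).prod ((qopen B hB sB).prod (qopen C hC sC))
      refine Filter.mem_of_superset
        (hopen.mem_nhds ⟨⟨a, haA, rfl⟩, ⟨b, hbB, rfl⟩, ⟨c, hcC, rfl⟩⟩) ?_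
      rintro ⟨w₁, w₂, w₃⟩ ⟨⟨x, hxA, rfl⟩, ⟨y, hyB, rfl⟩, ⟨z, hzC, rfl⟩⟩
      have : g (Quotient.mk s x) (Quotient.mk s y) (Quotient.mk s z) ∈ O' := by
        rw [hg x y z]
        exact hmprop x hxA y hyB z hzC
      exact hO'U this
    by_cases hI : m a b c ∈ I
    · -- hard case
      have hIO : I ⊆ O := by
        intro i hi
        show Quotient.mk s i ∈ O'
        have : Quotient.mk s i = Quotient.mk s (m a b c) :=
          (qeq i (m a b c)).2 (Or.inl ⟨hi, hI⟩)
        rw [this]; exact hfpO'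
      set sa : Set S := {a} ∩ Iᶜ with hsa
      set sb : Set S := {b} ∩ Iᶜ with hsb
      set sc : Set S := {c} ∩ Iᶜ with hsc
      have hseedC : sa ∪ (sb ∪ sc) ⊆ (interior I)ᶜ := by
        rintro x ((⟨rfl, hxI⟩ : x ∈ sa) | ((⟨rfl, hxI⟩ : x ∈ sb) | (⟨rfl, hxI⟩ : x ∈ sc))) <;>
          exact fun h => hxI (interior_subset h)
      have hseedcomp : IsCompact (sa ∪ (sb ∪ sc)) :=
        (((Set.finite_singleton a).inter_of_left _).union
          (((Set.finite_singleton b).inter_of_left _).union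
            ((Set.finite_singleton c).inter_of_left _))).isCompact
      set M : ℕ → Set S := fun n => Set.accumulate N n ∪ (sa ∪ (sb ∪ sc)) with hM
      have hMc : ∀ n, IsCompact (M n) := by
        intro n
        refine IsCompact.union ?_ hseedcomp
        rw [Set.accumulate_def]
        exact (Set.finite_Iic n).isCompact_biUnion (fun i _ => hNc i)
      have hMsub : ∀ n, M n ⊆ (interior I)ᶜ := by
        intro n
        refine Set.union_subset ?_ hseedC
        rw [Set.accumulate_def]
        exact Set.iUnion₂_subset fun i _ => hNsub i
      have hMchain : ∀ k l, k ≤ l → M k ⊆ M l := fun k l h =>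
        Set.union_subset_union_left _ (Set.monotone_accumulate h)
      have hMcover : ((interior I)ᶜ : Set S) ⊆ ⋃ n, M n := by
        intro x hx
        obtain ⟨t, ⟨n, rfl⟩, hxn⟩ := hNcov hx
        exact Set.mem_iUnion.2 ⟨n, Or.inl (Set.subset_accumulate hxn)⟩
      have hMcrit : ∀ A : Set S, A ⊆ (interior I)ᶜ →
          (∀ n, IsClosed (A ∩ M n)) → IsClosed A := by
        intro A hAC hA
        apply hNcrit A hAC
        intro n
        have heq : A ∩ N n = (A ∩ M n) ∩ N n := by
          ext x
          constructor
          · rintro ⟨hxA, hxN⟩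
            exact ⟨⟨hxA, Or.inl (Set.subset_accumulate hxN)⟩, hxN⟩
          · rintro ⟨⟨hxA, _⟩, hxN⟩
            exact ⟨hxA, hxN⟩
        rw [heq]
        exact (hA n).inter (hNc n).isClosed
      have hMa : {a} ∩ Iᶜ ⊆ M 0 := fun x hx => Or.inr (Or.inl hx)
      have hMb : {b} ∩ Iᶜ ⊆ M 0 := fun x hx => Or.inr (Or.inr (Or.inl hx))
      have hMc'' : {c} ∩ Iᶜ ⊆ M 0 := fun x hx => Or.inr (Or.inr (Or.inr hx))
      obtain ⟨A, B, C, hA, hB, hC, haA, hbB, hcC, hIA, hIB, hIC, hmprop⟩ :=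
        my_master m hm I hIclosed hideal M hMc hMsub hMchain hMcover hMcrit a b c
          hMa hMb hMc'' O hO hIO hmabc
      have shrink : ∀ (A : Set S) (x : S), IsOpen A → I ⊆ A → x ∈ A →
          ∃ A', IsOpen A' ∧ x ∈ A' ∧ A' ⊆ A ∧ (I ⊆ A' ∨ A' ∩ I = ∅) := by
        intro A x hA hIA hx
        by_cases hxI : x ∈ I
        · exact ⟨A, hA, hx, subset_rfl, Or.inl hIA⟩
        · exact ⟨A \ I, hA.sdiff hIclosed, ⟨hx, hxI⟩, Set.diff_subset,
            Or.inr (Set.diff_inter_self)⟩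
      obtain ⟨A', hA', haA', hA'A, hsatA⟩ := shrink A a hA hIA haA
      obtain ⟨B', hB', hbB', hB'B, hsatB⟩ := shrink B b hB hIB hbB
      obtain ⟨C', hC', hcC', hC'C, hsatC⟩ := shrink C c hC hIC hcC
      exact finish A' B' C' hA' hB' hC' haA' hbB' hcC' hsatA hsatB hsatC
        (fun x hx y hy z hz => hmprop x (hA'A hx) y (hB'B hy) z (hC'C hz))
    · -- easy case
      have ha : a ∉ I := fun h => hI (hideal b c a h).2.2
      have hb : b ∉ I := fun h => hI (hideal a c b h).2.1
      have hc : c ∉ I := fun h => hI (hideal a b c h).1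
      obtain ⟨A, B, C, hA, hB, hC, haA, hbB, hcC, hmprop⟩ :=
        my_wallace3 m hm isCompact_singleton isCompact_singleton isCompact_singleton hO
          (by rintro x rfl y rfl z rfl; exact hmabc)
      have hAI : (A \ I) ∩ I = ∅ := Set.diff_inter_self
      have hBI : (B \ I) ∩ I = ∅ := Set.diff_inter_self
      have hCI : (C \ I) ∩ I = ∅ := Set.diff_inter_self
      exact finish (A \ I) (B \ I) (C \ I) (hA.sdiff hIclosed) (hB.sdiff hIclosed)
        (hC.sdiff hIclosed) ⟨haA rfl, ha⟩ ⟨hbB rfl, hb⟩ ⟨hcC rfl, hc⟩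
        (Or.inr hAI) (Or.inr hBI) (Or.inr hCI)
        (fun x hx y hy z hz => hmprop x hx.1 y hy.1 z hz.1)
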